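/- Upper bound for fixed-radius turn-to-bearing path length: if a turn-to-bearing path of radius r > 0 exits its turn at angle Θ with 0 ≤ Θ ≤ φ₂ < 2π and then goes straight to (x,y), then its length is at most r·φ₂ + √((x − w_x)² + (y − w_y)²), where w = (r sin φ₂, r(1 − cos φ₂)). -/

import Mathlib

open Real

lemma tri_aux (x y a b c d : ℝ) :
    Real.sqrt ((x - a) ^ 2 + (y - b) ^ 2) ≤
      Real.sqrt ((x - c) ^ 2 + (y - d) ^ 2) +
        Real.sqrt ((c - a) ^ 2 + (d - b) ^ 2) := by
  have h := norm_add_le (⟨x - c, y - d⟩ : ℂ) ⟨c - a, d - b⟩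
  have e1 : (⟨x - c, y - d⟩ + ⟨c - a, d - b⟩ : ℂ) = ⟨x - a, y - b⟩ := by
    apply Complex.ext <;> simp <;> ring
  rw [e1] at h
  simpa [Complex.norm_def, Complex.normSq_mk, sq] using h

lemma one_sub_cos_le (t : ℝ) : 1 - Real.cos t ≤ t ^ 2 / 2 := by
  have h1 : |Real.sin (t / 2)| = Real.sqrt ((1 - Real.cos t) / 2) :=
    Real.abs_sin_half t
  have h2 : Real.sin (t / 2) ^ 2 = (1 - Real.cos t) / 2 := by
    rw [← sq_abs, h1, Real.sq_sqrt]
    nlinarith [Real.cos_le_one t]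
  have h3 : Real.sin (t / 2) ^ 2 ≤ (t / 2) ^ 2 := Real.sin_sq_le_sq
  nlinarith

/-- Upper bound for fixed-radius turn-to-bearing path length: if the turn of radius
`r > 0` exits at angle `Θ` with `0 ≤ Θ ≤ φ₂ < 2π`, the path length to `(x,y)` is at
most `r·φ₂ + ‖(x,y) − w‖` where `w = (r sin φ₂, r(1 − cos φ₂))`. -/
theorem path_length_upper_bound (r Θ φ₂ x y : ℝ) (hr : 0 < r)
    (h1 : 0 ≤ Θ) (h2 : Θ ≤ φ₂) (h3 : φ₂ < 2 * π) :
    r * Θ + Real.sqrt ((x - r * Real.sin Θ) ^ 2 +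
        (y - r * (1 - Real.cos Θ)) ^ 2) ≤
      r * φ₂ + Real.sqrt ((x - r * Real.sin φ₂) ^ 2 +
        (y - r * (1 - Real.cos φ₂)) ^ 2) := by
  have htri := tri_aux x y (r * Real.sin Θ) (r * (1 - Real.cos Θ))
    (r * Real.sin φ₂) (r * (1 - Real.cos φ₂))
  have hchord : Real.sqrt ((r * Real.sin φ₂ - r * Real.sin Θ) ^ 2 +
      (r * (1 - Real.cos φ₂) - r * (1 - Real.cos Θ)) ^ 2) ≤ r * (φ₂ - Θ) := by
    have hΔ : 0 ≤ φ₂ - Θ := by linarith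
    have hcos : 1 - Real.cos (φ₂ - Θ) ≤ (φ₂ - Θ) ^ 2 / 2 := one_sub_cos_le _
    have hcs : Real.cos (φ₂ - Θ) =
        Real.cos φ₂ * Real.cos Θ + Real.sin φ₂ * Real.sin Θ := Real.cos_sub _ _
    have hin : (r * Real.sin φ₂ - r * Real.sin Θ) ^ 2 +
        (r * (1 - Real.cos φ₂) - r * (1 - Real.cos Θ)) ^ 2 ≤ (r * (φ₂ - Θ)) ^ 2 := by
      have hs1 := Real.sin_sq_add_cos_sq φ₂
      have hs2 := Real.sin_sq_add_cos_sq Θ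
      nlinarith [sq_nonneg r, mul_pos hr hr]
    calc Real.sqrt ((r * Real.sin φ₂ - r * Real.sin Θ) ^ 2 +
          (r * (1 - Real.cos φ₂) - r * (1 - Real.cos Θ)) ^ 2)
        ≤ Real.sqrt ((r * (φ₂ - Θ)) ^ 2) := Real.sqrt_le_sqrt hin
      _ = r * (φ₂ - Θ) := Real.sqrt_sq (by positivity)
  linarith
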